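/- arXiv:2201.05586 — 3 statements merged into one kernel-verified Lean document; each statement's English description precedes it below -/
import Mathlib

section
/- Fix k ∈ {1,…,d}. The variance of the conditional expectation of the benchmark function f_δ given x_k satisfies var(E(f_δ | x_k)) = (δ²/27)(9/4)^d + (δ/9)(3/2)^d + 1/12. -/
open MeasureTheory Real

/-- Benchmark function `f_δ(x) = Σ_{i=1}^d x_i + δ ∏_{j=1}^d (1 + x_j)` on `[0,1]^d`. -/
noncomputable def fdelta {d : ℕ} (δ : ℝ) (x : Fin d → ℝ) : ℝ :=
  (∑ i, x i) + δ * ∏ j, (1 + x j)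

/-- `g_k(t) = E(f_δ | x_k = t)`: the integral of `f_δ` over all coordinates other
than the `k`-th one, which is fixed to `t`. -/
noncomputable def gk {d : ℕ} (δ : ℝ) (k : Fin d) (t : ℝ) : ℝ :=
  ∫ y in Set.Icc (0 : Fin d → ℝ) 1, fdelta δ (Function.update y k t)

lemma pi_restrict (d : ℕ) :
    Measure.pi (fun _ : Fin d => (volume : Measure ℝ).restrict (Set.Icc 0 1)) =
      (volume : Measure (Fin d → ℝ)).restrict (Set.Icc 0 1) := by
  refine Measure.pi_eq fun s hs => ?_
  rw [Measure.restrict_apply (MeasurableSet.univ_pi hs), ← Set.pi_univ_Icc,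
    ← Set.pi_inter_distrib, volume_pi_pi]
  exact Finset.prod_congr rfl fun i _ => (Measure.restrict_apply (hs i)).symm

lemma integral_pi_prod (d : ℕ) (f : Fin d → ℝ → ℝ) :
    (∫ y in Set.Icc (0 : Fin d → ℝ) 1, ∏ j, f j (y j)) =
      ∏ j, ∫ x in Set.Icc (0 : ℝ) 1, f j x := by
  rw [← pi_restrict]
  exact @MeasureTheory.integral_fintype_prod_eq_prod ℝ (Fin d) _ _ (fun _ => ℝ) f
    (fun _ => inferInstance) (fun _ => (volume : Measure ℝ).restrict (Set.Icc 0 1)) (fun _ => by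
      have : IsFiniteMeasure ((volume : Measure ℝ).restrict (Set.Icc 0 1)) := by
        constructor; simp
      infer_instance)

lemma volK (d : ℕ) : (volume : Measure (Fin d → ℝ)) (Set.Icc 0 1) = 1 := by
  rw [← Set.pi_univ_Icc, volume_pi_pi]; simp

lemma int_const (d : ℕ) (c : ℝ) : ∫ _ in Set.Icc (0 : Fin d → ℝ) 1, c = c := by
  rw [setIntegral_const, measureReal_def, volK]; simp

lemma int_one_R : ∫ _ in Set.Icc (0:ℝ) 1, (1:ℝ) = 1 := by
  rw [setIntegral_const]; simp

lemma int_id_R : ∫ x in Set.Icc (0:ℝ) 1, x = 1/2 := by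
  rw [integral_Icc_eq_integral_Ioc, ← intervalIntegral.integral_of_le zero_le_one]
  simp

lemma int_one_add_R : ∫ x in Set.Icc (0:ℝ) 1, (1+x) = 3/2 := by
  rw [integral_Icc_eq_integral_Ioc, ← intervalIntegral.integral_of_le zero_le_one,
    intervalIntegral.integral_add intervalIntegrable_const
      (continuous_id'.intervalIntegrable _ _)]
  simp
  norm_num

lemma int_coord (d : ℕ) (i : Fin d) :
    ∫ y in Set.Icc (0 : Fin d → ℝ) 1, y i = 1/2 := by
  have h : (∫ y in Set.Icc (0 : Fin d → ℝ) 1, ∏ j, (if j = i then y j else 1)) =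
      ∏ j, ∫ x in Set.Icc (0 : ℝ) 1, (if j = i then x else 1) :=
    integral_pi_prod d (fun j x => if j = i then x else 1)
  have h2 : (fun y : Fin d → ℝ => y i)
      = fun y => ∏ j, (if j = i then y j else 1) :=
    funext fun y => by simp [Finset.prod_ite_eq']
  rw [h2, h]
  have h3 : ∀ j : Fin d, (∫ x in Set.Icc (0:ℝ) 1, (if j = i then x else 1)) =
      if j = i then 1/2 else 1 := by
    intro j
    by_cases hj : j = i
    · simp only [if_pos hj]; exact int_id_R
    · simp only [if_neg hj]; exact int_one_R
  simp_rw [h3]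
  simp [Finset.prod_ite_eq']

lemma int_P (d : ℕ) (k : Fin d) :
    (∫ y in Set.Icc (0 : Fin d → ℝ) 1, ∏ j, (if j = k then (1:ℝ) else 1 + y j)) =
      (3/2 : ℝ) ^ (d - 1) := by
  have h : (∫ y in Set.Icc (0 : Fin d → ℝ) 1, ∏ j, (if j = k then (1:ℝ) else 1 + y j)) =
      ∏ j, ∫ x in Set.Icc (0 : ℝ) 1, (if j = k then (1:ℝ) else 1 + x) :=
    integral_pi_prod d (fun j x => if j = k then (1:ℝ) else 1 + x)
  rw [h]
  have h3 : ∀ j : Fin d, (∫ x in Set.Icc (0:ℝ) 1, (if j = k then (1:ℝ) else 1 + x)) =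
      if j = k then 1 else 3/2 := by
    intro j
    by_cases hj : j = k
    · simp only [if_pos hj]; exact int_one_R
    · simp only [if_neg hj]; exact int_one_add_R
  simp_rw [h3]
  rw [← Finset.prod_erase_mul _ _ (Finset.mem_univ k), if_pos rfl, mul_one,
    Finset.prod_congr rfl (fun j hj => if_neg (Finset.ne_of_mem_erase hj)),
    Finset.prod_const, Finset.card_erase_of_mem (Finset.mem_univ k)]
  simp

lemma gk_eq {d : ℕ} (δ : ℝ) (k : Fin d) (t : ℝ) :
    gk δ k t = (1 + δ * (3/2 : ℝ)^(d-1)) * t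
      + (((d:ℝ) - 1)/2 + δ * (3/2 : ℝ)^(d-1)) := by
  have hP : ∀ y : Fin d → ℝ, ∏ j, (1 + Function.update y k t j) =
      (1 + t) * ∏ j, (if j = k then (1:ℝ) else 1 + y j) := by
    intro y
    have e1 : ∏ j ∈ Finset.univ.erase k, (1 + Function.update y k t j)
        = ∏ j ∈ Finset.univ.erase k, (1 + y j) :=
      Finset.prod_congr rfl fun j hj => by
        rw [Function.update_of_ne (Finset.ne_of_mem_erase hj)]
    have e2 : ∏ j ∈ Finset.univ.erase k, (if j = k then (1:ℝ) else 1 + y j)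
        = ∏ j ∈ Finset.univ.erase k, (1 + y j) :=
      Finset.prod_congr rfl fun j hj => if_neg (Finset.ne_of_mem_erase hj)
    rw [← Finset.prod_erase_mul _ _ (Finset.mem_univ k),
      ← Finset.prod_erase_mul _ _ (Finset.mem_univ k), e1, e2,
      Function.update_self, if_pos rfl]
    ring
  have hS : ∀ y : Fin d → ℝ, ∑ i, Function.update y k t i =
      ∑ i, (if i = k then t else y i) :=
    fun y => Finset.sum_congr rfl fun i _ => Function.update_apply y k t i
  have hfd : ∀ y : Fin d → ℝ, fdelta δ (Function.update y k t) =
      (∑ i, (if i = k then t else y i)) +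
        (δ * (1 + t)) * ∏ j, (if j = k then (1:ℝ) else 1 + y j) := by
    intro y
    rw [fdelta, hS, hP]; ring
  have hcP : Continuous fun y : Fin d → ℝ => ∏ j, (if j = k then (1:ℝ) else 1 + y j) := by
    apply continuous_finset_prod
    intro j _
    by_cases h : j = k
    · simp only [if_pos h]; exact continuous_const
    · simp only [if_neg h]; exact continuous_const.add (continuous_apply j)
  have hcS : ∀ i : Fin d, Continuous fun y : Fin d → ℝ => (if i = k then t else y i) := by
    intro i
    by_cases h : i = k
    · simp only [if_pos h]; exact continuous_const
    · simp only [if_neg h]; exact continuous_apply i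
  have hIS : IntegrableOn (fun y : Fin d → ℝ => ∑ i, (if i = k then t else y i))
      (Set.Icc 0 1) volume :=
    (continuous_finset_sum _ fun i _ => hcS i).continuousOn.integrableOn_compact
      isCompact_Icc
  have hIP : IntegrableOn
      (fun y : Fin d → ℝ => (δ * (1 + t)) * ∏ j, (if j = k then (1:ℝ) else 1 + y j))
      (Set.Icc 0 1) volume :=
    (continuous_const.mul hcP).continuousOn.integrableOn_compact isCompact_Icc
  have hsum : (∫ y in Set.Icc (0:Fin d → ℝ) 1, ∑ i, (if i = k then t else y i))
      = t + ((d:ℝ)-1)/2 := by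
    rw [integral_finset_sum _
      (fun i _ => (hcS i).continuousOn.integrableOn_compact isCompact_Icc)]
    have h4 : ∀ i : Fin d, (∫ y in Set.Icc (0:Fin d → ℝ) 1, (if i = k then t else y i))
        = if i = k then t else 1/2 := by
      intro i
      by_cases h : i = k
      · simp only [if_pos h]; exact int_const d t
      · simp only [if_neg h]; exact int_coord d i
    simp_rw [h4]
    rw [← Finset.sum_erase_add _ _ (Finset.mem_univ k), if_pos rfl,
      Finset.sum_congr rfl (fun i hi => if_neg (Finset.ne_of_mem_erase hi)),
      Finset.sum_const, Finset.card_erase_of_mem (Finset.mem_univ k)]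
    have hd : 1 ≤ d := k.pos
    simp only [Finset.card_univ, Fintype.card_fin, nsmul_eq_mul]
    rw [Nat.cast_sub hd]
    push_cast
    ring
  unfold gk
  simp only [hfd]
  rw [integral_add hIS hIP, MeasureTheory.integral_const_mul, int_P, hsum]
  ring

lemma intAB (A B : ℝ) : ∫ t in Set.Icc (0:ℝ) 1, (A*t+B) = A/2 + B := by
  rw [integral_Icc_eq_integral_Ioc, ← intervalIntegral.integral_of_le zero_le_one,
    intervalIntegral.integral_add
      (Continuous.intervalIntegrable (u := fun x : ℝ => A * x) (continuous_const.mul continuous_id') _ _)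
      intervalIntegrable_const,
    intervalIntegral.integral_const_mul]
  simp
  ring

lemma intAB2 (A B : ℝ) : ∫ t in Set.Icc (0:ℝ) 1, (A*t+B)^2 = A^2/3 + A*B + B^2 := by
  have h : ∀ t : ℝ, (A*t+B)^2 = A^2*t^2 + (2*(A*B))*t + B^2 := fun t => by ring
  simp_rw [h]
  rw [integral_Icc_eq_integral_Ioc, ← intervalIntegral.integral_of_le zero_le_one,
    intervalIntegral.integral_add
      (Continuous.intervalIntegrable (u := fun x : ℝ => A ^ 2 * x ^ 2 + 2 * (A * B) * x)
        ((continuous_const.mul (continuous_pow 2)).add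
        (continuous_const.mul continuous_id')) _ _)
      intervalIntegrable_const,
    intervalIntegral.integral_add
      (Continuous.intervalIntegrable (u := fun x : ℝ => A ^ 2 * x ^ 2)
        (continuous_const.mul (continuous_pow 2)) _ _)
      (Continuous.intervalIntegrable (u := fun x : ℝ => 2 * (A * B) * x)
        (continuous_const.mul continuous_id') _ _),
    intervalIntegral.integral_const_mul, intervalIntegral.integral_const_mul,
    integral_pow]
  simp
  ring

/-- Variance of the conditional expectation of `f_δ` given `x_k`
(with `x_k` uniform on `[0,1]`):
`var(E(f_δ | x_k)) = (δ²/27)(9/4)^d + (δ/9)(3/2)^d + 1/12`. -/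
theorem fdelta_var_condExp_single (d : ℕ) (hd : 0 < d) (δ : ℝ) (k : Fin d) :
    (∫ t in Set.Icc (0 : ℝ) 1, (gk δ k t) ^ 2) -
        (∫ t in Set.Icc (0 : ℝ) 1, gk δ k t) ^ 2 =
      δ ^ 2 / 27 * (9 / 4 : ℝ) ^ d + δ / 9 * (3 / 2 : ℝ) ^ d + 1 / 12 := by
  obtain ⟨e, rfl⟩ : ∃ e, d = e + 1 := ⟨d - 1, by omega⟩
  simp only [gk_eq, Nat.add_sub_cancel]
  rw [intAB, intAB2]
  have h94 : (9/4:ℝ)^(e+1) = (9/4) * ((3/2:ℝ)^e)^2 := by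
    rw [pow_succ, show ((3/2:ℝ)^e)^2 = ((3/2:ℝ)^2)^e by
      rw [← pow_mul, ← pow_mul, mul_comm]]
    norm_num
    ring
  have h32 : (3/2:ℝ)^(e+1) = (3/2)*(3/2:ℝ)^e := by rw [pow_succ]; ring
  rw [h94, h32]
  push_cast
  ring
end

section
/- Fix k ∈ {1,…,d}. The variance of the conditional expectation of the benchmark function f_δ given all coordinates except x_k satisfies var(E(f_δ | x_l, l ≠ k)) = (δ(d−1)/9)(3/2)^d + δ² ( (27/28)(7/3)^d − (9/4)^d ) + (d−1)/12. -/
open MeasureTheory Real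

/-- `h_k(x) = E(f_δ | x_l, l ≠ k)`: the integral of `f_δ` over the `k`-th
coordinate with the remaining coordinates fixed. -/
noncomputable def hk {d : ℕ} (δ : ℝ) (k : Fin d) (x : Fin d → ℝ) : ℝ :=
  ∫ t in Set.Icc (0 : ℝ) 1, fdelta δ (Function.update x k t)

lemma integ01 (a b c : ℝ) : ∫ t in Set.Icc (0:ℝ) 1, (a*t^2 + b*t + c) = a/3 + b/2 + c := by
  have key : ∀ t : ℝ, HasDerivAt (fun t : ℝ => a/3*t^3 + b/2*t^2 + c*t) (a*t^2 + b*t + c) t := by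
    intro t
    have h := (((hasDerivAt_pow 3 t).const_mul (a/3)).add
      ((hasDerivAt_pow 2 t).const_mul (b/2))).add ((hasDerivAt_id t).const_mul c)
    refine h.congr_deriv ?_
    push_cast
    ring_nf
  rw [MeasureTheory.integral_Icc_eq_integral_Ioc, ← intervalIntegral.integral_of_le zero_le_one,
    intervalIntegral.integral_eq_sub_of_hasDerivAt (fun t _ => key t)
      ((Continuous.intervalIntegrable (by continuity) 0 1))]
  norm_num

lemma box_prod_integral {d : ℕ} (g : Fin d → ℝ → ℝ) :
    ∫ x in Set.Icc (0 : Fin d → ℝ) 1, ∏ i, g i (x i)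
      = ∏ i, ∫ t in Set.Icc (0:ℝ) 1, g i t := by
  rw [← MeasureTheory.integral_indicator measurableSet_Icc]
  have h : (Set.Icc (0 : Fin d → ℝ) 1).indicator (fun x => ∏ i, g i (x i))
      = fun x => ∏ i, (Set.Icc (0:ℝ) 1).indicator (g i) (x i) := by
    funext x
    by_cases h : x ∈ Set.Icc (0 : Fin d → ℝ) 1
    · rw [Set.indicator_of_mem h]
      exact Finset.prod_congr rfl fun i _ =>
        (Set.indicator_of_mem (Set.mem_Icc.mpr ⟨h.1 i, h.2 i⟩) (g i)).symm
    · rw [Set.indicator_of_notMem h]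
      have : ∃ i, x i ∉ Set.Icc (0:ℝ) 1 := by
        by_contra hc
        push_neg at hc
        exact h (Set.mem_Icc.mpr ⟨fun i => (hc i).1, fun i => (hc i).2⟩)
      obtain ⟨i, hi⟩ := this
      exact (Finset.prod_eq_zero (Finset.mem_univ i) (Set.indicator_of_notMem hi (g i))).symm
  rw [h, MeasureTheory.volume_pi, MeasureTheory.integral_fintype_prod_eq_prod]
  exact Finset.prod_congr rfl fun i _ => MeasureTheory.integral_indicator measurableSet_Icc

lemma prod_ite_special {d : ℕ} (i : Fin d) (B : Finset (Fin d)) (hi : i ∉ B)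
    (f g : Fin d → ℝ) :
    ∏ l, (if l = i then f l else if l ∈ B then g l else 1) = f i * ∏ l ∈ B, g l := by
  rw [← Finset.mul_prod_erase Finset.univ _ (Finset.mem_univ i), if_pos rfl]
  congr 1
  have hsub : B ⊆ Finset.univ.erase i := fun l hl =>
    Finset.mem_erase.mpr ⟨ne_of_mem_of_not_mem hl hi, Finset.mem_univ l⟩
  rw [← Finset.prod_subset hsub (fun l _ hl => by
    rw [if_neg (Finset.ne_of_mem_erase ‹l ∈ Finset.univ.erase i›), if_neg hl])]
  exact Finset.prod_congr rfl fun l hl => by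
    rw [if_neg (ne_of_mem_of_not_mem hl hi), if_pos hl]

lemma prod_ite_special2 {d : ℕ} (i j : Fin d) (hij : i ≠ j) (f g : Fin d → ℝ) :
    ∏ l, (if l = i then f l else if l = j then g l else 1) = f i * g j := by
  rw [← Finset.mul_prod_erase Finset.univ _ (Finset.mem_univ i), if_pos rfl]
  congr 1
  have h : ∏ l ∈ Finset.univ.erase i, (if l = i then f l else if l = j then g l else 1)
      = ∏ l ∈ Finset.univ.erase i, (if l = j then g l else 1) :=
    Finset.prod_congr rfl fun l hl => by rw [if_neg (Finset.ne_of_mem_erase hl)]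
  rw [h, Finset.prod_ite_eq' (Finset.univ.erase i) j g,
    if_pos (Finset.mem_erase.mpr ⟨hij.symm, Finset.mem_univ j⟩)]

lemma box0 {d : ℕ} (B : Finset (Fin d)) (v : ℝ → ℝ) :
    ∫ x in Set.Icc (0 : Fin d → ℝ) 1, ∏ l ∈ B, v (x l)
      = (∫ t in Set.Icc (0:ℝ) 1, v t) ^ B.card := by
  have h1 : (fun x : Fin d → ℝ => ∏ l ∈ B, v (x l))
      = fun x => ∏ l, (if l ∈ B then v else fun _ => (1:ℝ)) (x l) := by
    funext x
    have : ∀ l, (if l ∈ B then v else fun _ => (1:ℝ)) (x l)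
        = if l ∈ B then v (x l) else 1 := fun l => by split_ifs <;> rfl
    simp_rw [this, Finset.prod_ite_mem, Finset.univ_inter]
  rw [h1, box_prod_integral]
  have h2 : ∀ l : Fin d, (∫ t in Set.Icc (0:ℝ) 1, (if l ∈ B then v else fun _ => (1:ℝ)) t)
      = if l ∈ B then (∫ t in Set.Icc (0:ℝ) 1, v t) else 1 := by
    intro l
    split_ifs
    · rfl
    · simp [Real.volume_Icc]
  rw [Finset.prod_congr rfl fun l _ => h2 l, Finset.prod_ite_mem, Finset.univ_inter,
    Finset.prod_const]

lemma box1 {d : ℕ} (i : Fin d) (B : Finset (Fin d)) (hi : i ∉ B) (u v : ℝ → ℝ) :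
    ∫ x in Set.Icc (0 : Fin d → ℝ) 1, u (x i) * ∏ l ∈ B, v (x l)
      = (∫ t in Set.Icc (0:ℝ) 1, u t) * (∫ t in Set.Icc (0:ℝ) 1, v t) ^ B.card := by
  have h1 : (fun x : Fin d → ℝ => u (x i) * ∏ l ∈ B, v (x l))
      = fun x => ∏ l, (if l = i then u else if l ∈ B then v else fun _ => (1:ℝ)) (x l) := by
    funext x
    have : ∀ l, (if l = i then u else if l ∈ B then v else fun _ => (1:ℝ)) (x l)
        = if l = i then u (x l) else if l ∈ B then v (x l) else 1 := fun l => by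
      split_ifs <;> rfl
    simp_rw [this]
    exact (prod_ite_special i B hi (fun l => u (x l)) (fun l => v (x l))).symm
  rw [h1, box_prod_integral]
  have h2 : ∀ l : Fin d,
      (∫ t in Set.Icc (0:ℝ) 1, (if l = i then u else if l ∈ B then v else fun _ => (1:ℝ)) t)
      = if l = i then (∫ t in Set.Icc (0:ℝ) 1, u t)
        else if l ∈ B then (∫ t in Set.Icc (0:ℝ) 1, v t) else 1 := by
    intro l
    split_ifs
    · rfl
    · rfl
    · simp [Real.volume_Icc]
  rw [Finset.prod_congr rfl fun l _ => h2 l,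
    prod_ite_special i B hi _ (fun _ => ∫ t in Set.Icc (0:ℝ) 1, v t), Finset.prod_const]

lemma box2 {d : ℕ} (i j : Fin d) (hij : i ≠ j) (u v : ℝ → ℝ) :
    ∫ x in Set.Icc (0 : Fin d → ℝ) 1, u (x i) * v (x j)
      = (∫ t in Set.Icc (0:ℝ) 1, u t) * (∫ t in Set.Icc (0:ℝ) 1, v t) := by
  have h1 : (fun x : Fin d → ℝ => u (x i) * v (x j))
      = fun x => ∏ l, (if l = i then u else if l = j then v else fun _ => (1:ℝ)) (x l) := by
    funext x
    have : ∀ l, (if l = i then u else if l = j then v else fun _ => (1:ℝ)) (x l)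
        = if l = i then u (x l) else if l = j then v (x l) else 1 := fun l => by
      split_ifs <;> rfl
    simp_rw [this]
    exact (prod_ite_special2 i j hij (fun l => u (x l)) (fun l => v (x l))).symm
  rw [h1, box_prod_integral]
  have h2 : ∀ l : Fin d,
      (∫ t in Set.Icc (0:ℝ) 1, (if l = i then u else if l = j then v else fun _ => (1:ℝ)) t)
      = if l = i then (∫ t in Set.Icc (0:ℝ) 1, u t)
        else if l = j then (∫ t in Set.Icc (0:ℝ) 1, v t) else 1 := by
    intro l
    split_ifs
    · rfl
    · rfl
    · simp [Real.volume_Icc]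
  rw [Finset.prod_congr rfl fun l _ => h2 l,
    prod_ite_special2 i j hij _ (fun _ => ∫ t in Set.Icc (0:ℝ) 1, v t)]

lemma hk_eq {d : ℕ} (δ : ℝ) (k : Fin d) (x : Fin d → ℝ) :
    hk δ k x = (∑ i ∈ Finset.univ.erase k, x i) + 1/2
      + (3*δ/2) * ∏ j ∈ Finset.univ.erase k, (1 + x j) := by
  unfold hk fdelta
  have hsum : ∀ t : ℝ, ∑ i, Function.update x k t i
      = t + ∑ i ∈ Finset.univ.erase k, x i := by
    intro t
    rw [Finset.sum_update_of_mem (Finset.mem_univ k), Finset.sdiff_singleton_eq_erase]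
  have hprod : ∀ t : ℝ, ∏ j, (1 + Function.update x k t j)
      = (1+t) * ∏ j ∈ Finset.univ.erase k, (1 + x j) := by
    intro t
    have h : ∀ j, 1 + Function.update x k t j
        = Function.update (fun j => 1 + x j) k (1+t) j := fun j =>
      Function.apply_update (fun _ v => 1 + v) x k t j
    simp_rw [h]
    rw [Finset.prod_update_of_mem (Finset.mem_univ k), Finset.sdiff_singleton_eq_erase]
  simp_rw [hsum, hprod]
  have h2 : (fun t : ℝ => t + (∑ i ∈ Finset.univ.erase k, x i)
      + δ * ((1+t) * ∏ j ∈ Finset.univ.erase k, (1 + x j)))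
      = fun t => 0*t^2 + (1 + δ * ∏ j ∈ Finset.univ.erase k, (1 + x j))*t
        + ((∑ i ∈ Finset.univ.erase k, x i) + δ * ∏ j ∈ Finset.univ.erase k, (1 + x j)) := by
    funext t; ring
  rw [h2, integ01]
  ring

/-- Variance of the conditional expectation of `f_δ` given all coordinates except
`x_k` (with those coordinates uniform on `[0,1]^{d−1}`):
`var(E(f_δ | x_l, l ≠ k)) = (δ(d−1)/9)(3/2)^d + δ²((27/28)(7/3)^d − (9/4)^d) + (d−1)/12`. -/
theorem fdelta_var_condExp_except_single (d : ℕ) (hd : 0 < d) (δ : ℝ) (k : Fin d) :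
    (∫ x in Set.Icc (0 : Fin d → ℝ) 1, (hk δ k x) ^ 2) -
        (∫ x in Set.Icc (0 : Fin d → ℝ) 1, hk δ k x) ^ 2 =
      δ * ((d : ℝ) - 1) / 9 * (3 / 2 : ℝ) ^ d +
        δ ^ 2 * (27 / 28 * (7 / 3 : ℝ) ^ d - (9 / 4 : ℝ) ^ d) +
        ((d : ℝ) - 1) / 12 := by
  -- one-dimensional integrals
  have h_id : ∫ t in Set.Icc (0:ℝ) 1, t = 1/2 := by
    rw [show (fun t : ℝ => t) = fun t => 0*t^2 + 1*t + 0 from by funext t; ring, integ01]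
    norm_num
  have h_sq : ∫ t in Set.Icc (0:ℝ) 1, (t*t) = 1/3 := by
    rw [show (fun t : ℝ => t*t) = fun t => 1*t^2 + 0*t + 0 from by funext t; ring, integ01]
    norm_num
  have h_v : ∫ t in Set.Icc (0:ℝ) 1, (1+t) = 3/2 := by
    rw [show (fun t : ℝ => 1+t) = fun t => 0*t^2 + 1*t + 1 from by funext t; ring, integ01]
    norm_num
  have h_uv : ∫ t in Set.Icc (0:ℝ) 1, (t*(1+t)) = 5/6 := by
    rw [show (fun t : ℝ => t*(1+t)) = fun t => 1*t^2 + 1*t + 0 from by funext t; ring, integ01]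
    norm_num
  have h_vv : ∫ t in Set.Icc (0:ℝ) 1, ((1+t)*(1+t)) = 7/3 := by
    rw [show (fun t : ℝ => (1+t)*(1+t)) = fun t => 1*t^2 + 2*t + 1 from by funext t; ring,
      integ01]
    norm_num
  have hSc : Continuous (fun x : Fin d → ℝ => ∑ i ∈ Finset.univ.erase k, x i) :=
    continuous_finset_sum _ fun i _ => continuous_apply i
  have hPc : Continuous (fun x : Fin d → ℝ => ∏ j ∈ Finset.univ.erase k, (1 + x j)) :=
    continuous_finset_prod _ fun j _ => continuous_const.add (continuous_apply j)
  -- basic box integrals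
  have hJid : ∀ i : Fin d, ∫ x in Set.Icc (0 : Fin d → ℝ) 1, x i = 1/2 := by
    intro i
    have h := box1 i ∅ (Finset.notMem_empty i) (fun t => t) (fun t => t)
    simp only [Finset.prod_empty, mul_one, Finset.card_empty, pow_zero] at h
    exact h.trans h_id
  have hS1 : ∫ x in Set.Icc (0 : Fin d → ℝ) 1, ∑ i ∈ Finset.univ.erase k, x i
      = ((Finset.univ.erase k).card : ℝ)/2 := by
    rw [MeasureTheory.integral_finset_sum _
      (fun i _ => (continuous_apply i).integrableOn_Icc),
      Finset.sum_congr rfl (fun i _ => hJid i), Finset.sum_const, nsmul_eq_mul]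
    ring
  have hP1 : ∫ x in Set.Icc (0 : Fin d → ℝ) 1, ∏ j ∈ Finset.univ.erase k, (1 + x j)
      = (3/2 : ℝ)^(Finset.univ.erase k).card := by
    refine (box0 (Finset.univ.erase k) (fun t => 1+t)).trans ?_
    rw [h_v]
  have hPP : ∫ x in Set.Icc (0 : Fin d → ℝ) 1,
      (∏ j ∈ Finset.univ.erase k, (1 + x j)) * (∏ j ∈ Finset.univ.erase k, (1 + x j))
      = (7/3 : ℝ)^(Finset.univ.erase k).card := by
    have hrw : (fun x : Fin d → ℝ =>
        (∏ j ∈ Finset.univ.erase k, (1 + x j)) * (∏ j ∈ Finset.univ.erase k, (1 + x j)))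
        = fun x => ∏ j ∈ Finset.univ.erase k, ((1 + x j) * (1 + x j)) := by
      funext x
      rw [Finset.prod_mul_distrib]
    rw [hrw]
    refine (box0 (Finset.univ.erase k) (fun t => (1+t)*(1+t))).trans ?_
    rw [h_vv]
  have hpair : ∀ i j : Fin d, ∫ x in Set.Icc (0 : Fin d → ℝ) 1, x i * x j
      = if i = j then (1:ℝ)/3 else 1/4 := by
    intro i j
    by_cases h : i = j
    · subst h
      rw [if_pos rfl]
      have hb := box1 i ∅ (Finset.notMem_empty i) (fun t => t*t) (fun t => t)
      simp only [Finset.prod_empty, mul_one, Finset.card_empty, pow_zero] at hb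
      exact hb.trans h_sq
    · rw [if_neg h]
      refine (box2 i j h (fun t => t) (fun t => t)).trans ?_
      rw [h_id]
      norm_num
  have hSS : ∫ x in Set.Icc (0 : Fin d → ℝ) 1,
      (∑ i ∈ Finset.univ.erase k, x i) * (∑ i ∈ Finset.univ.erase k, x i)
      = ((Finset.univ.erase k).card : ℝ) * (((Finset.univ.erase k).card : ℝ)/4 + 1/12) := by
    simp_rw [Finset.sum_mul_sum]
    rw [MeasureTheory.integral_finset_sum _ (fun i _ =>
      (continuous_finset_sum _ fun j _ =>
        (continuous_apply i).mul (continuous_apply j)).integrableOn_Icc)]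
    have hinner : ∀ i ∈ Finset.univ.erase k,
        (∫ x in Set.Icc (0 : Fin d → ℝ) 1, ∑ j ∈ Finset.univ.erase k, x i * x j)
        = ((Finset.univ.erase k).card : ℝ)/4 + 1/12 := by
      intro i hi
      rw [MeasureTheory.integral_finset_sum _ (fun j _ =>
        ((continuous_apply i).mul (continuous_apply j)).integrableOn_Icc),
        Finset.sum_congr rfl (fun j _ => hpair i j)]
      have hsplit : ∀ j : Fin d, (if i = j then (1:ℝ)/3 else 1/4)
          = (if i = j then (1:ℝ)/12 else 0) + 1/4 := by
        intro j; split_ifs <;> norm_num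
      rw [Finset.sum_congr rfl (fun j _ => hsplit j), Finset.sum_add_distrib,
        Finset.sum_ite_eq (Finset.univ.erase k) i (fun _ => (1:ℝ)/12), if_pos hi,
        Finset.sum_const, nsmul_eq_mul]
      ring
    rw [Finset.sum_congr rfl hinner, Finset.sum_const, nsmul_eq_mul]
  have hSP : ∫ x in Set.Icc (0 : Fin d → ℝ) 1,
      (∑ i ∈ Finset.univ.erase k, x i) * (∏ j ∈ Finset.univ.erase k, (1 + x j))
      = ((Finset.univ.erase k).card : ℝ) * ((5/9) * (3/2)^(Finset.univ.erase k).card) := by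
    simp_rw [Finset.sum_mul]
    rw [MeasureTheory.integral_finset_sum _ (fun i _ => by
      exact ((continuous_apply i).mul hPc).integrableOn_Icc)]
    have hterm : ∀ i ∈ Finset.univ.erase k,
        (∫ x in Set.Icc (0 : Fin d → ℝ) 1, x i * ∏ j ∈ Finset.univ.erase k, (1 + x j))
        = (5/9 : ℝ) * (3/2)^(Finset.univ.erase k).card := by
      intro i hi
      have hrw : (fun x : Fin d → ℝ => x i * ∏ j ∈ Finset.univ.erase k, (1 + x j))
          = fun x => (x i * (1 + x i)) * ∏ l ∈ (Finset.univ.erase k).erase i, (1 + x l) := by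
        funext x
        rw [← Finset.mul_prod_erase (Finset.univ.erase k) _ hi]
        ring
      rw [hrw]
      refine (box1 i ((Finset.univ.erase k).erase i) (Finset.notMem_erase i _)
        (fun t => t*(1+t)) (fun t => 1+t)).trans ?_
      rw [h_uv, h_v, ← Finset.card_erase_add_one hi, pow_succ]
      ring
    rw [Finset.sum_congr rfl hterm, Finset.sum_const, nsmul_eq_mul]
  have hone : ∀ r : ℝ, ∫ x in Set.Icc (0 : Fin d → ℝ) 1, r = r := by
    intro r
    have hv : ∫ x in Set.Icc (0 : Fin d → ℝ) 1, (1:ℝ) = 1 := by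
      have := box0 (∅ : Finset (Fin d)) (fun t => t)
      simp only [Finset.prod_empty, Finset.card_empty, pow_zero] at this
      exact this
    have : (fun _ : Fin d → ℝ => r) = fun x => r * (1:ℝ) := by funext; ring
    rw [this, MeasureTheory.integral_const_mul, hv, mul_one]
  -- mean
  have hb : ∫ x in Set.Icc (0 : Fin d → ℝ) 1, hk δ k x
      = ((Finset.univ.erase k).card : ℝ)/2 + 1/2
        + (3*δ/2) * (3/2)^(Finset.univ.erase k).card := by
    simp only [hk_eq]
    have j1 : IntegrableOn (fun x : Fin d → ℝ =>
        (∑ i ∈ Finset.univ.erase k, x i) + 1/2) (Set.Icc 0 1) volume :=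
      hSc.integrableOn_Icc.add continuous_const.integrableOn_Icc
    have j2 : IntegrableOn (fun x : Fin d → ℝ =>
        (3*δ/2) * ∏ j ∈ Finset.univ.erase k, (1 + x j)) (Set.Icc 0 1) volume :=
      hPc.integrableOn_Icc.const_mul _
    rw [MeasureTheory.integral_add j1 j2,
      MeasureTheory.integral_add hSc.integrableOn_Icc continuous_const.integrableOn_Icc,
      MeasureTheory.integral_const_mul, hS1, hP1, hone]
  -- second moment
  have hb2 : ∫ x in Set.Icc (0 : Fin d → ℝ) 1, (hk δ k x)^2
      = ((Finset.univ.erase k).card : ℝ) * (((Finset.univ.erase k).card : ℝ)/4 + 1/12)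
        + (3*δ/2) * ((3*δ/2) * (7/3)^(Finset.univ.erase k).card)
        + 2*((3*δ/2) * (((Finset.univ.erase k).card : ℝ)
            * ((5/9) * (3/2)^(Finset.univ.erase k).card)))
        + ((Finset.univ.erase k).card : ℝ)/2
        + (3*δ/2) * (3/2)^(Finset.univ.erase k).card + 1/4 := by
    have hexp : (fun x : Fin d → ℝ => (hk δ k x)^2) = fun x =>
        (∑ i ∈ Finset.univ.erase k, x i) * (∑ i ∈ Finset.univ.erase k, x i)
        + (3*δ/2) * ((3*δ/2) * ((∏ j ∈ Finset.univ.erase k, (1 + x j))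
            * (∏ j ∈ Finset.univ.erase k, (1 + x j))))
        + 2*((3*δ/2) * ((∑ i ∈ Finset.univ.erase k, x i)
            * (∏ j ∈ Finset.univ.erase k, (1 + x j))))
        + (∑ i ∈ Finset.univ.erase k, x i)
        + (3*δ/2) * (∏ j ∈ Finset.univ.erase k, (1 + x j)) + 1/4 := by
      funext x
      rw [hk_eq]
      ring
    rw [hexp]
    have i1 : IntegrableOn (fun x : Fin d → ℝ =>
        (∑ i ∈ Finset.univ.erase k, x i) * (∑ i ∈ Finset.univ.erase k, x i))
        (Set.Icc 0 1) volume := (hSc.mul hSc).integrableOn_Icc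
    have i2 : IntegrableOn (fun x : Fin d → ℝ =>
        (3*δ/2) * ((3*δ/2) * ((∏ j ∈ Finset.univ.erase k, (1 + x j))
          * (∏ j ∈ Finset.univ.erase k, (1 + x j))))) (Set.Icc 0 1) volume :=
      ((hPc.mul hPc).integrableOn_Icc.const_mul _).const_mul _
    have i3 : IntegrableOn (fun x : Fin d → ℝ =>
        2*((3*δ/2) * ((∑ i ∈ Finset.univ.erase k, x i)
          * (∏ j ∈ Finset.univ.erase k, (1 + x j))))) (Set.Icc 0 1) volume :=
      ((hSc.mul hPc).integrableOn_Icc.const_mul _).const_mul _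
    have i4 : IntegrableOn (fun x : Fin d → ℝ => ∑ i ∈ Finset.univ.erase k, x i)
        (Set.Icc 0 1) volume := hSc.integrableOn_Icc
    have i5 : IntegrableOn (fun x : Fin d → ℝ =>
        (3*δ/2) * ∏ j ∈ Finset.univ.erase k, (1 + x j)) (Set.Icc 0 1) volume :=
      hPc.integrableOn_Icc.const_mul _
    have i12 : IntegrableOn (fun x : Fin d → ℝ =>
        (∑ i ∈ Finset.univ.erase k, x i) * (∑ i ∈ Finset.univ.erase k, x i)
        + (3*δ/2) * ((3*δ/2) * ((∏ j ∈ Finset.univ.erase k, (1 + x j))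
            * (∏ j ∈ Finset.univ.erase k, (1 + x j))))) (Set.Icc 0 1) volume := i1.add i2
    have i123 : IntegrableOn (fun x : Fin d → ℝ =>
        (∑ i ∈ Finset.univ.erase k, x i) * (∑ i ∈ Finset.univ.erase k, x i)
        + (3*δ/2) * ((3*δ/2) * ((∏ j ∈ Finset.univ.erase k, (1 + x j))
            * (∏ j ∈ Finset.univ.erase k, (1 + x j))))
        + 2*((3*δ/2) * ((∑ i ∈ Finset.univ.erase k, x i)
            * (∏ j ∈ Finset.univ.erase k, (1 + x j))))) (Set.Icc 0 1) volume := i12.add i3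
    have i1234 : IntegrableOn (fun x : Fin d → ℝ =>
        (∑ i ∈ Finset.univ.erase k, x i) * (∑ i ∈ Finset.univ.erase k, x i)
        + (3*δ/2) * ((3*δ/2) * ((∏ j ∈ Finset.univ.erase k, (1 + x j))
            * (∏ j ∈ Finset.univ.erase k, (1 + x j))))
        + 2*((3*δ/2) * ((∑ i ∈ Finset.univ.erase k, x i)
            * (∏ j ∈ Finset.univ.erase k, (1 + x j))))
        + (∑ i ∈ Finset.univ.erase k, x i)) (Set.Icc 0 1) volume := i123.add i4
    have i12345 : IntegrableOn (fun x : Fin d → ℝ =>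
        (∑ i ∈ Finset.univ.erase k, x i) * (∑ i ∈ Finset.univ.erase k, x i)
        + (3*δ/2) * ((3*δ/2) * ((∏ j ∈ Finset.univ.erase k, (1 + x j))
            * (∏ j ∈ Finset.univ.erase k, (1 + x j))))
        + 2*((3*δ/2) * ((∑ i ∈ Finset.univ.erase k, x i)
            * (∏ j ∈ Finset.univ.erase k, (1 + x j))))
        + (∑ i ∈ Finset.univ.erase k, x i)
        + (3*δ/2) * (∏ j ∈ Finset.univ.erase k, (1 + x j))) (Set.Icc 0 1) volume := i1234.add i5
    rw [MeasureTheory.integral_add i12345 continuous_const.integrableOn_Icc,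
      MeasureTheory.integral_add i1234 i5,
      MeasureTheory.integral_add i123 i4,
      MeasureTheory.integral_add i12 i3,
      MeasureTheory.integral_add i1 i2,
      MeasureTheory.integral_const_mul, MeasureTheory.integral_const_mul,
      MeasureTheory.integral_const_mul, MeasureTheory.integral_const_mul,
      MeasureTheory.integral_const_mul,
      hSS, hPP, hSP, hS1, hP1, hone]
  -- cardinality
  have hcard : (Finset.univ.erase k).card + 1 = d := by
    rw [Finset.card_erase_of_mem (Finset.mem_univ k), Finset.card_univ, Fintype.card_fin]
    omega
  have hd1 : d = (Finset.univ.erase k).card + 1 := hcard.symm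
  have e1 : (3/2 : ℝ)^d = (3/2)^(Finset.univ.erase k).card * (3/2) := by
    rw [← pow_succ, hcard]
  have e2 : (7/3 : ℝ)^d = (7/3)^(Finset.univ.erase k).card * (7/3) := by
    rw [← pow_succ, hcard]
  have e3 : (9/4 : ℝ)^d = (9/4)^(Finset.univ.erase k).card * (9/4) := by
    rw [← pow_succ, hcard]
  have e4 : (d : ℝ) = ((Finset.univ.erase k).card : ℝ) + 1 := by
    have h := congrArg (Nat.cast (R := ℝ)) hd1
    push_cast at h
    exact h
  have e5 : (9/4 : ℝ)^(Finset.univ.erase k).card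
      = (3/2 : ℝ)^(Finset.univ.erase k).card * (3/2)^(Finset.univ.erase k).card := by
    rw [← mul_pow]
    norm_num
  rw [hb, hb2, e1, e2, e3, e4, e5]
  ring
end

section
/- Assume δ ≥ 0 and d ≥ 1, so that var(f_δ) > 0. For each k ∈ {1,…,d}, the first-order Sobol' index of f_δ satisfies S_k = ( (δ²/27)(9/4)^d + (δ/9)(3/2)^d + 1/12 ) / ( (dδ/9)(3/2)^d + δ²((7/3)^d − (9/4)^d) + d/12 ), and the total Sobol' index satisfies S_k^tot = 1 − ( (δ(d−1)/9)(3/2)^d + δ²((27/28)(7/3)^d − (9/4)^d) + (d−1)/12 ) / ( (dδ/9)(3/2)^d + δ²((7/3)^d − (9/4)^d) + d/12 ). -/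
open MeasureTheory Real Set

theorem my_int_prod {n : ℕ} (μ : Measure ℝ) [SigmaFinite μ] (f : Fin n → ℝ → ℝ)
    (hf : ∀ i, Integrable (f i) μ) :
    Integrable (fun x : Fin n → ℝ => ∏ i, f i (x i)) (Measure.pi fun _ => μ) := by
  induction n with
  | zero =>
      simp only [Finset.univ_eq_empty, Finset.prod_empty, integrable_const_iff, one_ne_zero,
        false_or]
      rw [Measure.pi_of_empty]; infer_instance
  | succ n n_ih =>
      have := ((measurePreserving_piFinSuccAbove (fun _ : Fin (n+1) => μ) 0).symm)
      rw [← this.integrable_comp_emb (MeasurableEquiv.measurableEmbedding _)]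
      simp_rw [MeasurableEquiv.piFinSuccAbove_symm_apply, Fin.insertNthEquiv,
        Fin.prod_univ_succ, Fin.insertNth_zero]
      simp only [Fin.zero_succAbove, Function.comp_def, Fin.cons_zero, Fin.cons_succ,
        Equiv.coe_fn_mk]
      have : Integrable (fun (x : Fin n → ℝ) ↦ ∏ j, f (Fin.succ j) (x j)) (Measure.pi fun _ => μ) :=
        n_ih (fun i ↦ f i.succ) (fun i ↦ hf _)
      exact Integrable.mul_prod (hf 0) this

theorem my_eq_prod {n : ℕ} (μ : Measure ℝ) [SigmaFinite μ] (f : Fin n → ℝ → ℝ) :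
    ∫ x : Fin n → ℝ, ∏ i, f i (x i) ∂(Measure.pi fun _ => μ) = ∏ i, ∫ t, f i t ∂μ := by
  induction n with
  | zero =>
      simp only [Finset.univ_eq_empty, Finset.prod_empty, integral_const, smul_eq_mul, mul_one]
      rw [measureReal_def, Measure.pi_univ]
      simp
  | succ n n_ih =>
      calc
        _ = ∫ x : ℝ × (Fin n → ℝ),
            f 0 x.1 * ∏ i : Fin n, f (Fin.succ i) (x.2 i) ∂(μ.prod (Measure.pi fun _ => μ)) := by
          rw [← ((measurePreserving_piFinSuccAbove
            (fun _ : Fin (n+1) => μ) 0).symm).integral_comp']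
          congr 1 with x
          simp [Fin.prod_univ_succ, MeasurableEquiv.piFinSuccAbove_symm_apply,
            Fin.insertNthEquiv, Fin.insertNth_zero, Fin.zero_succAbove]
        _ = (∫ t, f 0 t ∂μ) * ∏ i : Fin n, ∫ t, f (Fin.succ i) t ∂μ := by
          rw [← n_ih (fun i => f i.succ), ← integral_prod_mul]
        _ = ∏ i, ∫ t, f i t ∂μ := by rw [Fin.prod_univ_succ]

noncomputable def muI : Measure ℝ := volume.restrict (Set.Icc 0 1)

instance : IsProbabilityMeasure muI :=
  ⟨by rw [muI, Measure.restrict_apply_univ, Real.volume_Icc]; norm_num⟩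

lemma box_eq (d : ℕ) :
    (volume : Measure (Fin d → ℝ)).restrict (Set.Icc 0 1) = Measure.pi fun _ => muI := by
  have h : (Set.Icc (0 : Fin d → ℝ) 1) = Set.pi Set.univ fun _ => Set.Icc (0:ℝ) 1 :=
    (Set.pi_univ_Icc _ _).symm
  rw [h]
  refine (Measure.pi_eq fun s hs => ?_).symm
  rw [Measure.restrict_apply (MeasurableSet.univ_pi hs), ← Set.pi_inter_distrib, volume_pi,
    Measure.pi_pi]
  refine Finset.prod_congr rfl fun i _ => ?_
  rw [muI, Measure.restrict_apply (hs i)]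

lemma cont_int {g : ℝ → ℝ} (hg : Continuous g) : Integrable g muI := by
  rw [muI]; exact hg.integrableOn_Icc

lemma poly_int (c₀ c₁ c₂ : ℝ) :
    ∫ t, (c₀ + c₁ * t + c₂ * t ^ 2) ∂muI = c₀ + c₁ / 2 + c₂ / 3 := by
  rw [muI, MeasureTheory.integral_Icc_eq_integral_Ioc,
    ← intervalIntegral.integral_of_le (zero_le_one' ℝ)]
  have h : ∀ t ∈ Set.uIcc (0:ℝ) 1,
      HasDerivAt (fun u : ℝ => c₀ * u + c₁ / 2 * u ^ 2 + c₂ / 3 * u ^ 3)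
        (c₀ + c₁ * t + c₂ * t ^ 2) t := by
    intro t _
    have h1 : HasDerivAt (fun u : ℝ => c₀ * u) c₀ t := by
      simpa using (hasDerivAt_id t).const_mul c₀
    have h2 : HasDerivAt (fun u : ℝ => c₁ / 2 * u ^ 2) (c₁ * t) t := by
      have := (hasDerivAt_pow 2 t).const_mul (c₁ / 2)
      refine this.congr_deriv ?_
      push_cast; ring
    have h3 : HasDerivAt (fun u : ℝ => c₂ / 3 * u ^ 3) (c₂ * t ^ 2) t := by
      have := (hasDerivAt_pow 3 t).const_mul (c₂ / 3)
      refine this.congr_deriv ?_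
      push_cast; ring
    exact (h1.add h2).add h3
  have hc : IntervalIntegrable (fun u : ℝ => c₀ + c₁ * u + c₂ * u ^ 2) volume 0 1 :=
    ((continuous_const.add (continuous_const.mul continuous_id)).add
      (continuous_const.mul (continuous_pow 2))).intervalIntegrable 0 1
  rw [intervalIntegral.integral_eq_sub_of_hasDerivAt h hc]
  norm_num

section D
variable {d : ℕ}

local notation "π" => (Measure.pi fun _ : Fin d => muI)

lemma key_prod (F : Fin d → ℝ → ℝ) (hF : ∀ i, Continuous (F i)) :
    Integrable (fun x : Fin d → ℝ => ∏ i, F i (x i)) π ∧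
      ∫ x, ∏ i, F i (x i) ∂π = ∏ i, ∫ t, F i t ∂muI :=
  ⟨my_int_prod muI F fun i => cont_int (hF i), my_eq_prod muI F⟩

lemma single_eq (g h : ℝ → ℝ) (i : Fin d) (s : Finset (Fin d)) (hi : i ∉ s) (x : Fin d → ℝ) :
    (∏ j, (if j = i then g (x j) else if j ∈ s then h (x j) else 1))
      = g (x i) * ∏ j ∈ s, h (x j) := by
  have hsub : s ⊆ Finset.univ.erase i := fun j hj =>
    Finset.mem_erase.2 ⟨fun e => hi (e ▸ hj), Finset.mem_univ j⟩
  rw [← Finset.mul_prod_erase Finset.univ _ (Finset.mem_univ i), if_pos rfl]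
  congr 1
  calc ∏ j ∈ Finset.univ.erase i, (if j = i then g (x j) else if j ∈ s then h (x j) else 1)
      = ∏ j ∈ Finset.univ.erase i, (if j ∈ s then h (x j) else 1) :=
        Finset.prod_congr rfl fun j hj => if_neg (Finset.ne_of_mem_erase hj)
    _ = ∏ j ∈ Finset.univ.erase i ∩ s, h (x j) := Finset.prod_ite_mem _ _ _
    _ = ∏ j ∈ s, h (x j) := by rw [Finset.inter_eq_right.mpr hsub]

lemma single_int (g h : ℝ → ℝ) (hg : Continuous g) (hh : Continuous h)
    (i : Fin d) (s : Finset (Fin d)) (hi : i ∉ s) :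
    Integrable (fun x : Fin d → ℝ => g (x i) * ∏ j ∈ s, h (x j)) π ∧
      ∫ x, g (x i) * ∏ j ∈ s, h (x j) ∂π = (∫ t, g t ∂muI) * (∫ t, h t ∂muI) ^ s.card := by
  have hsub : s ⊆ Finset.univ.erase i := fun j hj =>
    Finset.mem_erase.2 ⟨fun e => hi (e ▸ hj), Finset.mem_univ j⟩
  have hF : ∀ j : Fin d, Continuous fun t => if j = i then g t else if j ∈ s then h t else 1 := by
    intro j
    split_ifs <;> first | exact hg | exact hh | exact continuous_const
  have hk := key_prod _ hF
  constructor
  · refine hk.1.congr (Filter.Eventually.of_forall fun x => ?_)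
    exact single_eq g h i s hi x
  · rw [show (fun x : Fin d → ℝ => g (x i) * ∏ j ∈ s, h (x j))
        = fun x => ∏ j, (if j = i then g (x j) else if j ∈ s then h (x j) else 1) from
      funext fun x => (single_eq g h i s hi x).symm]
    rw [hk.2]
    have hv : ∀ j : Fin d, (∫ t, (if j = i then g t else if j ∈ s then h t else 1) ∂muI)
        = if j = i then ∫ t, g t ∂muI else if j ∈ s then ∫ t, h t ∂muI else 1 := by
      intro j; split_ifs <;> simp
    simp_rw [hv]
    rw [← Finset.mul_prod_erase Finset.univ _ (Finset.mem_univ i), if_pos rfl]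
    congr 1
    calc ∏ j ∈ Finset.univ.erase i,
          (if j = i then ∫ t, g t ∂muI else if j ∈ s then ∫ t, h t ∂muI else 1)
        = ∏ j ∈ Finset.univ.erase i, (if j ∈ s then ∫ t, h t ∂muI else 1) :=
          Finset.prod_congr rfl fun j hj => if_neg (Finset.ne_of_mem_erase hj)
      _ = ∏ _j ∈ Finset.univ.erase i ∩ s, ∫ t, h t ∂muI := Finset.prod_ite_mem _ _ _
      _ = (∫ t, h t ∂muI) ^ s.card := by
          rw [Finset.inter_eq_right.mpr hsub, Finset.prod_const]

lemma prod_int (h : ℝ → ℝ) (hh : Continuous h) (s : Finset (Fin d)) :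
    Integrable (fun x : Fin d → ℝ => ∏ j ∈ s, h (x j)) π ∧
      ∫ x, ∏ j ∈ s, h (x j) ∂π = (∫ t, h t ∂muI) ^ s.card := by
  have hF : ∀ j : Fin d, Continuous fun t => if j ∈ s then h t else 1 := by
    intro j; split_ifs <;> first | exact hh | exact continuous_const
  have hk := key_prod _ hF
  have heq : ∀ x : Fin d → ℝ, (∏ j, (if j ∈ s then h (x j) else 1)) = ∏ j ∈ s, h (x j) := by
    intro x
    rw [Finset.prod_ite_mem, Finset.univ_inter]
  constructor
  · exact hk.1.congr (Filter.Eventually.of_forall fun x => heq x)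
  · rw [show (fun x : Fin d → ℝ => ∏ j ∈ s, h (x j))
        = fun x => ∏ j, (if j ∈ s then h (x j) else 1) from funext fun x => (heq x).symm, hk.2]
    have hv : ∀ j : Fin d, (∫ t, (if j ∈ s then h t else 1) ∂muI)
        = if j ∈ s then ∫ t, h t ∂muI else 1 := by
      intro j; split_ifs <;> simp
    simp_rw [hv]
    rw [Finset.prod_ite_mem, Finset.univ_inter, Finset.prod_const]


lemma int_id : ∫ t, t ∂muI = 1 / 2 := by simpa using poly_int 0 1 0
lemma int_sq : ∫ t, t ^ 2 ∂muI = 1 / 3 := by simpa using poly_int 0 0 1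
lemma int_oa : ∫ t, (1 + t) ∂muI = 3 / 2 := by
  have := poly_int 1 1 0
  norm_num at this
  convert this using 2 <;> norm_num
lemma int_oasq : ∫ t, (1 + t) ^ 2 ∂muI = 7 / 3 := by
  rw [show (fun t : ℝ => (1 + t) ^ 2) = fun t => 1 + 2 * t + 1 * t ^ 2 from
    funext fun t => by ring, poly_int]
  norm_num
lemma int_ta : ∫ t, t * (1 + t) ∂muI = 5 / 6 := by
  rw [show (fun t : ℝ => t * (1 + t)) = fun t => 0 + 1 * t + 1 * t ^ 2 from
    funext fun t => by ring, poly_int]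
  norm_num

lemma B_coord (g : ℝ → ℝ) (hg : Continuous g) (i : Fin d) :
    Integrable (fun x : Fin d → ℝ => g (x i)) π ∧
      ∫ x, g (x i) ∂π = ∫ t, g t ∂muI := by
  have := single_int g (fun t => 1 + t) hg (by continuity) i ∅ (Finset.notMem_empty i)
  simpa using this

lemma B_pairmul (i j : Fin d) :
    Integrable (fun x : Fin d → ℝ => x i * x j) π ∧
      ∫ x, x i * x j ∂π = if i = j then 1 / 3 else 1 / 4 := by
  by_cases h : i = j
  · subst h
    have := B_coord (fun t => t ^ 2) (by continuity) i
    rw [if_pos rfl]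
    constructor
    · refine this.1.congr (Filter.Eventually.of_forall fun x => by ring)
    · rw [show (fun x : Fin d → ℝ => x i * x i) = fun x => (x i) ^ 2 from
        funext fun x => by ring, this.2, int_sq]
  · have := single_int (fun t => t) (fun t => t) continuous_id continuous_id i {j}
      (by simp [h])
    rw [if_neg h]
    simp only [Finset.prod_singleton, Finset.card_singleton, pow_one] at this
    rw [int_id] at this
    exact ⟨this.1, by rw [this.2]; norm_num⟩

lemma B_sum (s : Finset (Fin d)) :
    Integrable (fun x : Fin d → ℝ => ∑ i ∈ s, x i) π ∧
      ∫ x, ∑ i ∈ s, x i ∂π = (s.card : ℝ) / 2 := by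
  have hi : ∀ i ∈ s, Integrable (fun x : Fin d → ℝ => x i) π :=
    fun i _ => (B_coord (fun t => t) continuous_id i).1
  refine ⟨integrable_finset_sum s hi, ?_⟩
  rw [integral_finset_sum s hi]
  have : ∀ i ∈ s, ∫ x, x i ∂π = (1 : ℝ) / 2 := fun i _ => by
    rw [(B_coord (fun t => t) continuous_id i).2, int_id]
  rw [Finset.sum_congr rfl this, Finset.sum_const, nsmul_eq_mul]
  ring

lemma B_prod1 (s : Finset (Fin d)) :
    Integrable (fun x : Fin d → ℝ => ∏ j ∈ s, (1 + x j)) π ∧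
      ∫ x, ∏ j ∈ s, (1 + x j) ∂π = (3 / 2 : ℝ) ^ s.card := by
  have := prod_int (fun t => 1 + t) (by continuity) s
  rw [int_oa] at this
  exact this

lemma B_prod2 (s : Finset (Fin d)) :
    Integrable (fun x : Fin d → ℝ => (∏ j ∈ s, (1 + x j)) ^ 2) π ∧
      ∫ x, (∏ j ∈ s, (1 + x j)) ^ 2 ∂π = (7 / 3 : ℝ) ^ s.card := by
  have := prod_int (fun t => (1 + t) ^ 2) (by continuity) s
  rw [int_oasq] at this
  have he : ∀ x : Fin d → ℝ, (∏ j ∈ s, (1 + x j)) ^ 2 = ∏ j ∈ s, (1 + x j) ^ 2 :=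
    fun x => by rw [Finset.prod_pow]
  constructor
  · exact this.1.congr (Filter.Eventually.of_forall fun x => (he x).symm)
  · rw [show (fun x : Fin d → ℝ => (∏ j ∈ s, (1 + x j)) ^ 2)
      = fun x => ∏ j ∈ s, (1 + x j) ^ 2 from funext he, this.2]

lemma B_sumsq (s : Finset (Fin d)) :
    Integrable (fun x : Fin d → ℝ => (∑ i ∈ s, x i) ^ 2) π ∧
      ∫ x, (∑ i ∈ s, x i) ^ 2 ∂π
        = (s.card : ℝ) * ((s.card : ℝ) / 4 + 1 / 12) := by
  have he : ∀ x : Fin d → ℝ, (∑ i ∈ s, x i) ^ 2 = ∑ i ∈ s, ∑ j ∈ s, x i * x j :=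
    fun x => by rw [sq, Finset.sum_mul_sum]
  have hint : ∀ i ∈ s, Integrable (fun x : Fin d → ℝ => ∑ j ∈ s, x i * x j) π :=
    fun i _ => integrable_finset_sum s fun j _ => (B_pairmul i j).1
  constructor
  · exact (integrable_finset_sum s hint).congr
      (Filter.Eventually.of_forall fun x => (he x).symm)
  · rw [show (fun x : Fin d → ℝ => (∑ i ∈ s, x i) ^ 2)
      = fun x => ∑ i ∈ s, ∑ j ∈ s, x i * x j from funext he]
    rw [integral_finset_sum s hint]
    have h1 : ∀ i ∈ s, ∫ x, ∑ j ∈ s, x i * x j ∂π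
        = (s.card : ℝ) / 4 + 1 / 12 := by
      intro i hi
      rw [integral_finset_sum s fun j _ => (B_pairmul i j).1]
      have h2 : ∀ j ∈ s, ∫ x, x i * x j ∂π
          = 1 / 4 + if i = j then (1 / 12 : ℝ) else 0 := by
        intro j _
        rw [(B_pairmul i j).2]
        split_ifs <;> norm_num
      rw [Finset.sum_congr rfl h2, Finset.sum_add_distrib, Finset.sum_const,
        Finset.sum_ite_eq s i fun _ => (1 / 12 : ℝ), if_pos hi, nsmul_eq_mul]
      ring
    rw [Finset.sum_congr rfl h1, Finset.sum_const, nsmul_eq_mul]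

lemma B_sumprod (s : Finset (Fin d)) :
    Integrable (fun x : Fin d → ℝ => (∑ i ∈ s, x i) * ∏ j ∈ s, (1 + x j)) π ∧
      ∫ x, (∑ i ∈ s, x i) * ∏ j ∈ s, (1 + x j) ∂π
        = (s.card : ℝ) * (5 / 9) * (3 / 2 : ℝ) ^ s.card := by
  have he : ∀ x : Fin d → ℝ, (∑ i ∈ s, x i) * ∏ j ∈ s, (1 + x j)
      = ∑ i ∈ s, x i * ∏ j ∈ s, (1 + x j) := fun x => by rw [Finset.sum_mul]
  have key : ∀ i ∈ s, Integrable (fun x : Fin d → ℝ => x i * ∏ j ∈ s, (1 + x j)) π ∧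
      ∫ x, x i * ∏ j ∈ s, (1 + x j) ∂π = (5 / 6) * (3 / 2 : ℝ) ^ (s.erase i).card := by
    intro i hi
    have hs := single_int (fun t => t * (1 + t)) (fun t => 1 + t) (by continuity)
      (by continuity) i (s.erase i) (Finset.notMem_erase i s)
    rw [int_ta, int_oa] at hs
    have he2 : ∀ x : Fin d → ℝ, x i * ∏ j ∈ s, (1 + x j)
        = (x i * (1 + x i)) * ∏ j ∈ s.erase i, (1 + x j) := by
      intro x
      rw [← Finset.mul_prod_erase s _ hi]
      ring
    constructor
    · exact hs.1.congr (Filter.Eventually.of_forall fun x => (he2 x).symm)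
    · rw [show (fun x : Fin d → ℝ => x i * ∏ j ∈ s, (1 + x j))
        = fun x => (x i * (1 + x i)) * ∏ j ∈ s.erase i, (1 + x j) from funext he2, hs.2]
  constructor
  · refine (integrable_finset_sum s fun i hi => (key i hi).1).congr
      (Filter.Eventually.of_forall fun x => (he x).symm)
  · rw [show (fun x : Fin d → ℝ => (∑ i ∈ s, x i) * ∏ j ∈ s, (1 + x j))
      = fun x => ∑ i ∈ s, x i * ∏ j ∈ s, (1 + x j) from funext he,
      integral_finset_sum s fun i hi => (key i hi).1]
    have hv : ∀ i ∈ s, ∫ x, x i * ∏ j ∈ s, (1 + x j) ∂π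
        = (5 / 6) * (3 / 2 : ℝ) ^ (s.card - 1) := by
      intro i hi
      rw [(key i hi).2, Finset.card_erase_of_mem hi]
    rw [Finset.sum_congr rfl hv, Finset.sum_const, nsmul_eq_mul]
    rcases Nat.eq_zero_or_pos s.card with h | h
    · rw [h]; norm_num
    · obtain ⟨m, hm⟩ : ∃ m, s.card = m + 1 := ⟨s.card - 1, by omega⟩
      rw [hm]
      simp only [Nat.add_sub_cancel, pow_succ]
      ring


lemma int_comb (s : Finset (Fin d)) (c₀ c₁ c₂ c₃ c₄ c₅ : ℝ) :
    ∫ x, (c₀ + c₁ * (∑ i ∈ s, x i) + c₂ * (∏ j ∈ s, (1 + x j))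
        + c₃ * (∑ i ∈ s, x i) ^ 2
        + c₄ * ((∑ i ∈ s, x i) * ∏ j ∈ s, (1 + x j))
        + c₅ * (∏ j ∈ s, (1 + x j)) ^ 2) ∂π
      = c₀ + c₁ * ((s.card : ℝ) / 2) + c₂ * (3 / 2 : ℝ) ^ s.card
        + c₃ * ((s.card : ℝ) * ((s.card : ℝ) / 4 + 1 / 12))
        + c₄ * ((s.card : ℝ) * (5 / 9) * (3 / 2 : ℝ) ^ s.card)
        + c₅ * (7 / 3 : ℝ) ^ s.card := by
  have h0 : Integrable (fun _ : Fin d → ℝ => c₀) π := integrable_const c₀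
  have h1 := (B_sum (d := d) s).1.const_mul c₁
  have h2 := (B_prod1 (d := d) s).1.const_mul c₂
  have h3 := (B_sumsq (d := d) s).1.const_mul c₃
  have h4 := (B_sumprod (d := d) s).1.const_mul c₄
  have h5 := (B_prod2 (d := d) s).1.const_mul c₅
  have hA1 : Integrable (fun x : Fin d → ℝ => c₀) π := h0
  have hA2 : Integrable (fun x : Fin d → ℝ => c₀ + c₁ * (∑ i ∈ s, x i)) π := hA1.add h1
  have hA3 : Integrable (fun x : Fin d → ℝ => c₀ + c₁ * (∑ i ∈ s, x i) + c₂ * (∏ j ∈ s, (1 + x j))) π := hA2.add h2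
  have hA4 : Integrable (fun x : Fin d → ℝ => c₀ + c₁ * (∑ i ∈ s, x i) + c₂ * (∏ j ∈ s, (1 + x j)) + c₃ * (∑ i ∈ s, x i) ^ 2) π := hA3.add h3
  have hA5 : Integrable (fun x : Fin d → ℝ => c₀ + c₁ * (∑ i ∈ s, x i) + c₂ * (∏ j ∈ s, (1 + x j)) + c₃ * (∑ i ∈ s, x i) ^ 2 + c₄ * ((∑ i ∈ s, x i) * ∏ j ∈ s, (1 + x j))) π := hA4.add h4
  rw [integral_add hA5 h5,
    integral_add hA4 h4,
    integral_add hA3 h3,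
    integral_add hA2 h2,
    integral_add hA1 h1,
    integral_const_mul, integral_const_mul, integral_const_mul, integral_const_mul,
    integral_const_mul,
    (B_sum (d := d) s).2, (B_prod1 (d := d) s).2, (B_sumsq (d := d) s).2,
    (B_sumprod (d := d) s).2, (B_prod2 (d := d) s).2]
  simp

end D

/-- Variance of `f_δ` over the uniform measure on `[0,1]^d`. -/
noncomputable def fdeltaVar (d : ℕ) (δ : ℝ) : ℝ :=
  (∫ x in Set.Icc (0 : Fin d → ℝ) 1, (fdelta δ x) ^ 2) -
    (∫ x in Set.Icc (0 : Fin d → ℝ) 1, fdelta δ x) ^ 2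

section C
variable {d : ℕ}

local notation "π" => (Measure.pi fun _ : Fin d => muI)

lemma C_f (δ : ℝ) : ∫ x, fdelta δ x ∂π = (d : ℝ) / 2 + δ * (3 / 2 : ℝ) ^ d := by
  rw [integral_congr_ae (Filter.Eventually.of_forall fun x : Fin d → ℝ =>
    show fdelta δ x = 0 + 1 * (∑ i ∈ Finset.univ, x i) + δ * (∏ j ∈ Finset.univ, (1 + x j))
        + 0 * (∑ i ∈ Finset.univ, x i) ^ 2
        + 0 * ((∑ i ∈ Finset.univ, x i) * ∏ j ∈ Finset.univ, (1 + x j))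
        + 0 * (∏ j ∈ Finset.univ, (1 + x j)) ^ 2 by unfold fdelta; ring),
    int_comb, Finset.card_univ, Fintype.card_fin]
  ring

lemma C_f2 (δ : ℝ) : ∫ x, (fdelta δ x) ^ 2 ∂π
    = (d : ℝ) * ((d : ℝ) / 4 + 1 / 12) + 2 * δ * ((d : ℝ) * (5 / 9) * (3 / 2 : ℝ) ^ d)
      + δ ^ 2 * (7 / 3 : ℝ) ^ d := by
  rw [integral_congr_ae (Filter.Eventually.of_forall fun x : Fin d → ℝ =>
    show (fdelta δ x) ^ 2
        = 0 + 0 * (∑ i ∈ Finset.univ, x i) + 0 * (∏ j ∈ Finset.univ, (1 + x j))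
        + 1 * (∑ i ∈ Finset.univ, x i) ^ 2
        + (2 * δ) * ((∑ i ∈ Finset.univ, x i) * ∏ j ∈ Finset.univ, (1 + x j))
        + δ ^ 2 * (∏ j ∈ Finset.univ, (1 + x j)) ^ 2 by unfold fdelta; ring),
    int_comb, Finset.card_univ, Fintype.card_fin]
  ring

lemma fdelta_update (δ t : ℝ) (k : Fin d) (y : Fin d → ℝ) :
    fdelta δ (Function.update y k t)
      = t + (∑ i ∈ Finset.univ.erase k, y i)
        + δ * ((1 + t) * ∏ j ∈ Finset.univ.erase k, (1 + y j)) := by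
  unfold fdelta
  rw [Finset.sum_update_of_mem (Finset.mem_univ k),
    show (fun j => 1 + Function.update y k t j) = Function.update (fun j => 1 + y j) k (1 + t)
      from funext fun j => by
        rw [Function.update_apply, Function.update_apply]
        split_ifs <;> rfl,
    Finset.prod_update_of_mem (Finset.mem_univ k)]
  simp [Finset.sdiff_singleton_eq_erase]

lemma C_gk (δ t : ℝ) (k : Fin d) :
    gk δ k t = t + ((Finset.univ.erase k).card : ℝ) / 2
      + δ * (1 + t) * (3 / 2 : ℝ) ^ (Finset.univ.erase k).card := by
  unfold gk
  rw [box_eq, integral_congr_ae (Filter.Eventually.of_forall fun y : Fin d → ℝ =>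
    show fdelta δ (Function.update y k t)
        = t + 1 * (∑ i ∈ Finset.univ.erase k, y i)
          + (δ * (1 + t)) * (∏ j ∈ Finset.univ.erase k, (1 + y j))
          + 0 * (∑ i ∈ Finset.univ.erase k, y i) ^ 2
          + 0 * ((∑ i ∈ Finset.univ.erase k, y i) * ∏ j ∈ Finset.univ.erase k, (1 + y j))
          + 0 * (∏ j ∈ Finset.univ.erase k, (1 + y j)) ^ 2 by
      rw [fdelta_update]; ring),
    int_comb]
  ring

lemma C_hk (δ : ℝ) (k : Fin d) (x : Fin d → ℝ) :
    hk δ k x = 1 / 2 + (∑ i ∈ Finset.univ.erase k, x i)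
      + δ * (3 / 2) * (∏ j ∈ Finset.univ.erase k, (1 + x j)) := by
  unfold hk
  rw [show (volume : Measure ℝ).restrict (Set.Icc 0 1) = muI from rfl,
    integral_congr_ae (Filter.Eventually.of_forall fun t : ℝ =>
    show fdelta δ (Function.update x k t)
        = ((∑ i ∈ Finset.univ.erase k, x i) + δ * ∏ j ∈ Finset.univ.erase k, (1 + x j))
          + (1 + δ * ∏ j ∈ Finset.univ.erase k, (1 + x j)) * t + 0 * t ^ 2 by
      rw [fdelta_update]; ring),
    poly_int]
  ring

end C

/-- For `δ ≥ 0` and `d ≥ 1`, the first-order Sobol' index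
`S_k = var(E(f_δ | x_k)) / var(f_δ)` and the total Sobol' index
`S_k^tot = 1 − var(E(f_δ | x_l, l ≠ k)) / var(f_δ)` of `f_δ` are given by the
closed-form expressions below. -/
theorem fdelta_sobol_indices (d : ℕ) (hd : 1 ≤ d) (δ : ℝ) (hδ : 0 ≤ δ) (k : Fin d) :
    ((∫ t in Set.Icc (0 : ℝ) 1, (gk δ k t) ^ 2) -
        (∫ t in Set.Icc (0 : ℝ) 1, gk δ k t) ^ 2) / fdeltaVar d δ =
      (δ ^ 2 / 27 * (9 / 4 : ℝ) ^ d + δ / 9 * (3 / 2 : ℝ) ^ d + 1 / 12) /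
        ((d : ℝ) * δ / 9 * (3 / 2 : ℝ) ^ d +
          δ ^ 2 * ((7 / 3 : ℝ) ^ d - (9 / 4 : ℝ) ^ d) + (d : ℝ) / 12) ∧
    1 - ((∫ x in Set.Icc (0 : Fin d → ℝ) 1, (hk δ k x) ^ 2) -
          (∫ x in Set.Icc (0 : Fin d → ℝ) 1, hk δ k x) ^ 2) / fdeltaVar d δ =
      1 - (δ * ((d : ℝ) - 1) / 9 * (3 / 2 : ℝ) ^ d +
            δ ^ 2 * (27 / 28 * (7 / 3 : ℝ) ^ d - (9 / 4 : ℝ) ^ d) +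
            ((d : ℝ) - 1) / 12) /
          ((d : ℝ) * δ / 9 * (3 / 2 : ℝ) ^ d +
            δ ^ 2 * ((7 / 3 : ℝ) ^ d - (9 / 4 : ℝ) ^ d) + (d : ℝ) / 12) := by
  obtain ⟨m, rfl⟩ : ∃ m, d = m + 1 := ⟨d - 1, by omega⟩
  have hcard : (Finset.univ.erase k).card = m := by
    rw [Finset.card_erase_of_mem (Finset.mem_univ k), Finset.card_univ, Fintype.card_fin]
    omega
  set a : ℝ := (3 / 2 : ℝ) ^ m with ha
  set b : ℝ := (7 / 3 : ℝ) ^ m with hb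
  have h94 : (9 / 4 : ℝ) ^ m = a ^ 2 := by
    rw [ha, show (9 / 4 : ℝ) = (3 / 2) ^ 2 by norm_num, ← pow_mul, ← pow_mul, mul_comm]
  have hmuI : (volume : Measure ℝ).restrict (Set.Icc 0 1) = muI := rfl
  -- gk moments
  have hgk1 : (∫ t in Set.Icc (0 : ℝ) 1, gk δ k t)
      = ((m : ℝ) / 2 + δ * a) + (1 + δ * a) / 2 := by
    rw [hmuI, integral_congr_ae (Filter.Eventually.of_forall fun t : ℝ =>
      show gk δ k t = ((m : ℝ) / 2 + δ * a) + (1 + δ * a) * t + 0 * t ^ 2 by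
        rw [C_gk, hcard, ← ha]; ring), poly_int]
    ring
  have hgk2 : (∫ t in Set.Icc (0 : ℝ) 1, (gk δ k t) ^ 2)
      = ((m : ℝ) / 2 + δ * a) ^ 2 + (2 * ((m : ℝ) / 2 + δ * a) * (1 + δ * a)) / 2
        + (1 + δ * a) ^ 2 / 3 := by
    rw [hmuI, integral_congr_ae (Filter.Eventually.of_forall fun t : ℝ =>
      show (gk δ k t) ^ 2 = ((m : ℝ) / 2 + δ * a) ^ 2
          + (2 * ((m : ℝ) / 2 + δ * a) * (1 + δ * a)) * t + (1 + δ * a) ^ 2 * t ^ 2 by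
        rw [C_gk, hcard, ← ha]; ring), poly_int]
  -- hk moments
  have hhk1 : (∫ x in Set.Icc (0 : Fin (m + 1) → ℝ) 1, hk δ k x)
      = 1 / 2 + (m : ℝ) / 2 + δ * (3 / 2) * a := by
    rw [box_eq, integral_congr_ae (Filter.Eventually.of_forall fun x : Fin (m + 1) → ℝ =>
      show hk δ k x = 1 / 2 + 1 * (∑ i ∈ Finset.univ.erase k, x i)
          + (δ * (3 / 2)) * (∏ j ∈ Finset.univ.erase k, (1 + x j))
          + 0 * (∑ i ∈ Finset.univ.erase k, x i) ^ 2
          + 0 * ((∑ i ∈ Finset.univ.erase k, x i) * ∏ j ∈ Finset.univ.erase k, (1 + x j))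
          + 0 * (∏ j ∈ Finset.univ.erase k, (1 + x j)) ^ 2 by rw [C_hk]; ring),
      int_comb, hcard, ← ha]
    ring
  have hhk2 : (∫ x in Set.Icc (0 : Fin (m + 1) → ℝ) 1, (hk δ k x) ^ 2)
      = 1 / 4 + (m : ℝ) / 2 + δ * (3 / 2) * a + (m : ℝ) * ((m : ℝ) / 4 + 1 / 12)
        + 3 * δ * ((m : ℝ) * (5 / 9) * a) + 9 / 4 * δ ^ 2 * b := by
    rw [box_eq, integral_congr_ae (Filter.Eventually.of_forall fun x : Fin (m + 1) → ℝ =>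
      show (hk δ k x) ^ 2 = 1 / 4 + 1 * (∑ i ∈ Finset.univ.erase k, x i)
          + (δ * (3 / 2)) * (∏ j ∈ Finset.univ.erase k, (1 + x j))
          + 1 * (∑ i ∈ Finset.univ.erase k, x i) ^ 2
          + (3 * δ) * ((∑ i ∈ Finset.univ.erase k, x i) * ∏ j ∈ Finset.univ.erase k, (1 + x j))
          + (9 / 4 * δ ^ 2) * (∏ j ∈ Finset.univ.erase k, (1 + x j)) ^ 2 by
        rw [C_hk]; ring),
      int_comb, hcard, ← ha, ← hb]
    ring
  -- variance
  have hVar : fdeltaVar (m + 1) δ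
      = ((m + 1 : ℕ) : ℝ) * δ / 9 * (3 / 2 : ℝ) ^ (m + 1) +
          δ ^ 2 * ((7 / 3 : ℝ) ^ (m + 1) - (9 / 4 : ℝ) ^ (m + 1)) + ((m + 1 : ℕ) : ℝ) / 12 := by
    unfold fdeltaVar
    rw [box_eq, C_f, C_f2]
    push_cast
    simp only [pow_succ, h94, ← ha, ← hb]
    ring
  constructor
  · rw [hgk1, hgk2, hVar]
    congr 1
    · push_cast
      simp only [pow_succ, h94, ← ha]
      ring
  · rw [hhk1, hhk2, hVar]
    congr 2
    · push_cast
      simp only [pow_succ, h94, ← ha, ← hb]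
      ring
end
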